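/- The function α_0(t) = -9(3t + 1)(t + 3)/(3t² + 2t + 3)³ - 2√3/((3t² + 2t + 3)^{3/2}(t - 1)) + 9/(32t²) + 1/(3(t - 1)^4) is strictly positive for all t ∈ (0, 1). -/

import Mathlib

/-- Coefficient of `c` in `det(T₁)` for two nested regular tetrahedra. -/
noncomputable def alpha1 (t : ℝ) : ℝ :=
  -(1 / 2) * (9 * Real.sqrt 2 * t
    - 72 * (t ^ 2 + 6 * t + 1) / (Real.sqrt (3 * t ^ 2 + 2 * t + 3)) ^ 3
    - 8 * Real.sqrt 3 / (t - 1)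
    + 9 * Real.sqrt 2 / t ^ 2)

/-- Constant term (in `c`) of `det(T₁)` for two nested regular tetrahedra. -/
noncomputable def alpha0 (t : ℝ) : ℝ :=
  -9 * (3 * t + 1) * (t + 3) / (3 * t ^ 2 + 2 * t + 3) ^ 3
    - 2 * Real.sqrt 3 / ((Real.sqrt (3 * t ^ 2 + 2 * t + 3)) ^ 3 * (t - 1))
    + 9 / (32 * t ^ 2)
    + 1 / (3 * (t - 1) ^ 4)

lemma poly_pos {t : ℝ} (h0 : 0 < t) (h1 : t < 1) :
    0 < 729 - 1458*t - 27*t^2 - 216*t^3 + 24642*t^4 - 30956*t^5 + 24642*t^6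
      - 216*t^7 - 27*t^8 - 1458*t^9 + 729*t^10 := by
  nlinarith [sq_nonneg (t*(1-t)), sq_nonneg (t^2*(1-t)), sq_nonneg (t^3*(1-t)),
    sq_nonneg (t^4*(1-t)), sq_nonneg (1-t), sq_nonneg t, sq_nonneg (t^2-t),
    pow_pos h0 2, pow_pos h0 3, pow_pos h0 4, pow_pos h0 5,
    sq_nonneg (27*t^2 - 20*t + 5), mul_pos h0 (sub_pos.mpr h1),
    sq_nonneg (t^3*(1-t)^2), sq_nonneg (t^2*(1-t)^2)]

/-- `α₀(t) > 0` for all `t ∈ (0,1)`. -/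
theorem stmt9 : ∀ t ∈ Set.Ioo (0 : ℝ) 1, 0 < alpha0 t := by
  rintro t ⟨ht0, ht1⟩
  have hQ : (0:ℝ) < 3 * t ^ 2 + 2 * t + 3 := by nlinarith
  have hs : 0 < Real.sqrt (3 * t ^ 2 + 2 * t + 3) := Real.sqrt_pos.mpr hQ
  have h1t : 0 < 1 - t := by linarith
  -- square-root term is positive
  have hB : 0 < -(2 * Real.sqrt 3 / ((Real.sqrt (3 * t ^ 2 + 2 * t + 3)) ^ 3 * (t - 1))) := by
    have h3 : 0 < Real.sqrt 3 := Real.sqrt_pos.mpr (by norm_num)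
    have hden : (Real.sqrt (3 * t ^ 2 + 2 * t + 3)) ^ 3 * (t - 1) < 0 := by
      have := pow_pos hs 3
      nlinarith
    have := div_neg_of_pos_of_neg (by linarith : (0:ℝ) < 2 * Real.sqrt 3) hden
    linarith
  -- rational part
  have hR : 0 < -9 * (3 * t + 1) * (t + 3) / (3 * t ^ 2 + 2 * t + 3) ^ 3
      + 9 / (32 * t ^ 2) + 1 / (3 * (t - 1) ^ 4) := by
    have hQ3 : (0:ℝ) < (3 * t ^ 2 + 2 * t + 3) ^ 3 := pow_pos hQ 3
    have ht4 : (0:ℝ) < (t - 1) ^ 4 := by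
      rw [show (t-1)^4 = (1-t)^4 by ring]; exact pow_pos h1t 4
    have ht2 : (0:ℝ) < t ^ 2 := by positivity
    have key := poly_pos ht0 ht1
    have heq : -9 * (3 * t + 1) * (t + 3) / (3 * t ^ 2 + 2 * t + 3) ^ 3
        + 9 / (32 * t ^ 2) + 1 / (3 * (t - 1) ^ 4)
        = (729 - 1458*t - 27*t^2 - 216*t^3 + 24642*t^4 - 30956*t^5 + 24642*t^6
            - 216*t^7 - 27*t^8 - 1458*t^9 + 729*t^10)
          / (96 * t ^ 2 * (t - 1) ^ 4 * (3 * t ^ 2 + 2 * t + 3) ^ 3) := by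
      field_simp [(by linarith : t - 1 < 0).ne, ht0.ne', hQ.ne']
      ring
    rw [heq]
    exact div_pos key (mul_pos (mul_pos (by positivity) ht4) hQ3)
  unfold alpha0
  linarith
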